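/- Let X, Y : [a,b] → ℝ^d be continuously differentiable paths with X(a) = Y(a), and let X̃, Ỹ : [a,b] → ℝ^{d+1} be their time augmentations X̃(t) = (t, X(t)) and Ỹ(t) = (t, Y(t)) (so that the first coordinate of each augmented path is strictly increasing). If all signature coordinates of the augmented paths agree, i.e., S^{i₁…i_k}_{[a,b]}(X̃) = S^{i₁…i_k}_{[a,b]}(Ỹ) for every k ∈ ℕ and every word (i₁,…,i_k) ∈ {1,…,d+1}^k, then X = Y on [a,b]. In other words, for paths possessing a strictly monotone coordinate, the full signature together with the starting point uniquely determines the path. -/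

import Mathlib

open MeasureTheory

/-- Auxiliary nested iterated integral: the word is given with its *last* letter first
(i.e. reversed), so that `sigRev X a (i :: w) b = ∫_a^b (sigRev X a w t) · (X^i)'(t) dt`. -/
noncomputable def sigRev {d : ℕ} (X : ℝ → Fin d → ℝ) (a : ℝ) : List (Fin d) → ℝ → ℝ
  | [], _ => 1
  | i :: w, b => ∫ t in a..b, sigRev X a w t * deriv (fun s => X s i) t

/-- The signature coordinate `S^{i₁…i_k}_{[a,b]}(X)` for the word `w = [i₁, …, i_k]`. -/
noncomputable def sigCoord {d : ℕ} (X : ℝ → Fin d → ℝ) (a b : ℝ) (w : List (Fin d)) : ℝ :=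
  sigRev X a w.reverse b

/-- The time augmentation `X̃(t) = (t, X(t)) ∈ ℝ^{d+1}` of a path `X : ℝ → ℝ^d`;
its first coordinate is strictly increasing. -/
noncomputable def timeAug {d : ℕ} (X : ℝ → Fin d → ℝ) : ℝ → Fin (d + 1) → ℝ :=
  fun t => Fin.cons t (X t)

/-- Iterated primitive based at `a`. -/
noncomputable def iterP (a : ℝ) (f : ℝ → ℝ) : ℕ → ℝ → ℝ
  | 0 => f
  | k + 1 => fun t => ∫ s in a..t, iterP a f k s

lemma iterP_continuous (a : ℝ) {f : ℝ → ℝ} (hf : Continuous f) :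
    ∀ k, Continuous (iterP a f k) := by
  intro k
  induction k with
  | zero => exact hf
  | succ k ih =>
    refine continuous_iff_continuousAt.2 fun t => ?_
    exact ((ih.integral_hasStrictDerivAt a t).hasDerivAt.continuousAt)

lemma iterP_hasDerivAt (a : ℝ) {f : ℝ → ℝ} (hf : Continuous f) (k : ℕ) (t : ℝ) :
    HasDerivAt (iterP a f (k + 1)) (iterP a f k t) t :=
  ((iterP_continuous a hf k).integral_hasStrictDerivAt a t).hasDerivAt

lemma iterP_at_base (a : ℝ) (f : ℝ → ℝ) (k : ℕ) : iterP a f (k + 1) a = 0 := by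
  simp [iterP]

lemma iterP_sub (a : ℝ) {f g : ℝ → ℝ} (hf : Continuous f) (hg : Continuous g) :
    ∀ k t, iterP a (fun s => f s - g s) k t = iterP a f k t - iterP a g k t := by
  intro k
  induction k with
  | zero => intro t; rfl
  | succ k ih =>
    intro t
    have h1 : IntervalIntegrable (iterP a f k) volume a t :=
      (iterP_continuous a hf k).intervalIntegrable a t
    have h2 : IntervalIntegrable (iterP a g k) volume a t :=
      (iterP_continuous a hg k).intervalIntegrable a t
    simp only [iterP]
    rw [intervalIntegral.integral_congr (g := fun s => iterP a f k s - iterP a g k s)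
      (fun s _ => ih s), intervalIntegral.integral_sub h1 h2]

/-- Integration-by-parts reduction to moments. -/
lemma iterP_moment (a b : ℝ) {f : ℝ → ℝ} (hf : Continuous f) :
    ∀ k m : ℕ, (∫ s in a..b, (b - s) ^ k * iterP a f m s) =
      (k.factorial : ℝ) * iterP a f (m + k + 1) b := by
  intro k
  induction k with
  | zero => intro m; simp [iterP]
  | succ k ih =>
    intro m
    set G := iterP a f (m + 1) with hG
    have hder : ∀ s : ℝ, HasDerivAt (fun s => (b - s) ^ (k + 1) * G s)
        (((k + 1 : ℕ) : ℝ) * (b - s) ^ k * (-1) * G s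
          + (b - s) ^ (k + 1) * iterP a f m s) s := by
      intro s
      have h1 : HasDerivAt (fun s : ℝ => (b - s) ^ (k + 1))
          (((k + 1 : ℕ) : ℝ) * (b - s) ^ (k + 1 - 1) * (-1)) s :=
        ((hasDerivAt_id s).const_sub b).pow (k + 1)
      have h2 := h1.mul (iterP_hasDerivAt a hf m s)
      rw [Nat.add_sub_cancel] at h2
      exact h2
    have hGc : Continuous G := iterP_continuous a hf (m + 1)
    have hmc : Continuous (iterP a f m) := iterP_continuous a hf m
    have hcont : Continuous fun s => ((k + 1 : ℕ) : ℝ) * (b - s) ^ k * (-1) * G s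
        + (b - s) ^ (k + 1) * iterP a f m s := by fun_prop
    have hint := intervalIntegral.integral_eq_sub_of_hasDerivAt
      (f := fun s => (b - s) ^ (k + 1) * G s) (fun x _ => hder x)
      (hcont.intervalIntegrable a b)
    have hGa : G a = 0 := iterP_at_base a f m
    have hint2 : (∫ s in a..b, (((k + 1 : ℕ) : ℝ) * (b - s) ^ k * (-1) * G s
        + (b - s) ^ (k + 1) * iterP a f m s)) = 0 := by
      simpa [hGa, sub_self] using hint
    clear hint; rename' hint2 => hint
    have hsplit : (∫ s in a..b, (((k + 1 : ℕ) : ℝ) * (b - s) ^ k * (-1) * G s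
        + (b - s) ^ (k + 1) * iterP a f m s)) =
        (∫ s in a..b, (b - s) ^ (k + 1) * iterP a f m s)
          - ((k + 1 : ℕ) : ℝ) * ∫ s in a..b, (b - s) ^ k * G s := by
      rw [intervalIntegral.integral_congr (g := fun s =>
          (b - s) ^ (k + 1) * iterP a f m s
            - ((k + 1 : ℕ) : ℝ) * ((b - s) ^ k * G s)) (fun s _ => by ring),
        intervalIntegral.integral_sub
          ((by fun_prop : Continuous fun s : ℝ => (b - s) ^ (k + 1) * iterP a f m s).intervalIntegrable a b)
          (((by fun_prop : Continuous fun s : ℝ => ((k + 1 : ℕ) : ℝ) * ((b - s) ^ k * G s))).intervalIntegrable a b),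
        intervalIntegral.integral_const_mul]
    rw [hsplit] at hint
    have hihm : (∫ s in a..b, (b - s) ^ k * G s)
        = (k.factorial : ℝ) * iterP a f (m + 1 + k + 1) b := ih (m + 1)
    have : (∫ s in a..b, (b - s) ^ (k + 1) * iterP a f m s)
        = ((k + 1 : ℕ) : ℝ) * ((k.factorial : ℝ) * iterP a f (m + 1 + k + 1) b) := by
      rw [← hihm]; linarith [hint]
    rw [this, show m + 1 + k + 1 = m + (k + 1) + 1 by omega, Nat.factorial_succ]
    push_cast
    ring

lemma sigRev_time_cons {d : ℕ} (X : ℝ → Fin d → ℝ) (a t : ℝ) (w : List (Fin (d + 1))) :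
    sigRev (timeAug X) a ((0 : Fin (d + 1)) :: w) t
      = ∫ s in a..t, sigRev (timeAug X) a w s := by
  have h : (fun s : ℝ => timeAug X s (0 : Fin (d + 1))) = fun s : ℝ => s := by
    funext s; simp [timeAug]
  simp only [sigRev, h, deriv_id'', mul_one]

lemma sigRev_single {d : ℕ} (X : ℝ → Fin d → ℝ) (hX : ContDiff ℝ 1 X) (a t : ℝ) (i : Fin d) :
    sigRev (timeAug X) a [Fin.succ i] t = X t i - X a i := by
  have hXi : ContDiff ℝ 1 (fun u => X u i) := contDiff_pi.mp hX i
  have h : (fun u : ℝ => timeAug X u (Fin.succ i)) = fun u : ℝ => X u i := by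
    funext u; simp [timeAug]
  simp only [sigRev, h, one_mul]
  exact intervalIntegral.integral_deriv_eq_sub
    (fun x _ => (hXi.differentiable one_ne_zero).differentiableAt)
    ((hXi.continuous_deriv le_rfl).intervalIntegrable a t)

lemma sigRev_word {d : ℕ} (X : ℝ → Fin d → ℝ) (hX : ContDiff ℝ 1 X) (a : ℝ) (i : Fin d) :
    ∀ k t, sigRev (timeAug X) a (List.replicate k (0 : Fin (d + 1)) ++ [Fin.succ i]) t
      = iterP a (fun s => X s i - X a i) k t := by
  intro k
  induction k with
  | zero => intro t; simpa [iterP] using sigRev_single X hX a t i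
  | succ k ih =>
    intro t
    rw [List.replicate_succ, List.cons_append, sigRev_time_cons]
    rw [intervalIntegral.integral_congr (fun s _ => ih s)]
    rfl

theorem sig_determines_path (d : ℕ) (a b : ℝ) (hab : a ≤ b)
    (X Y : ℝ → Fin d → ℝ)
    (hX : ContDiff ℝ 1 X) (hY : ContDiff ℝ 1 Y)
    (h0 : X a = Y a)
    (hsig : ∀ w : List (Fin (d + 1)),
      sigCoord (timeAug X) a b w = sigCoord (timeAug Y) a b w) :
    ∀ t ∈ Set.Icc a b, X t = Y t := by
  intro t ht
  rcases eq_or_lt_of_le hab with heq | hlt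
  · have : t = a := le_antisymm (heq ▸ ht.2) ht.1
    rw [this, h0]
  funext i
  set f : ℝ → ℝ := fun s => X s i - Y s i with hf
  suffices hft : f t = 0 by simpa [hf, sub_eq_zero] using hft
  have hXc : Continuous (fun s => X s i) := (contDiff_pi.mp hX i).continuous
  have hYc : Continuous (fun s => Y s i) := (contDiff_pi.mp hY i).continuous
  have hfc : Continuous f := hXc.sub hYc
  have hFc : Continuous (fun s => X s i - X a i) := hXc.sub continuous_const
  have hGc : Continuous (fun s => Y s i - Y a i) := hYc.sub continuous_const
  -- all iterated primitives of f vanish at b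
  have hiter : ∀ k, iterP a f k b = 0 := by
    intro k
    have h1 := hsig (Fin.succ i :: List.replicate k (0 : Fin (d + 1)))
    unfold sigCoord at h1
    rw [List.reverse_cons, List.reverse_replicate] at h1
    rw [sigRev_word X hX a i k b, sigRev_word Y hY a i k b] at h1
    have hXa : X a i = Y a i := congrFun h0 i
    have hsplit := iterP_sub a hFc hGc k b
    have hfeq : f = fun s => (X s i - X a i) - (Y s i - Y a i) := by
      funext s; rw [hf]; simp only; rw [hXa]; ring
    rw [hfeq, hsplit, h1, sub_self]
  -- moments of f vanish
  have hmom : ∀ k : ℕ, (∫ s in a..b, (b - s) ^ k * f s) = 0 := by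
    intro k
    have h2 := iterP_moment a b hfc k 0
    rw [show (0 : ℕ) + k + 1 = k + 1 by omega, hiter (k + 1), mul_zero] at h2
    simpa [iterP] using h2
  -- polynomial moments (in b - s) vanish
  have hpoly : ∀ p : Polynomial ℝ, (∫ s in a..b, Polynomial.eval (b - s) p * f s) = 0 := by
    intro p
    induction p using Polynomial.induction_on' with
    | add p q hp hq =>
      have hip : IntervalIntegrable (fun s => Polynomial.eval (b - s) p * f s) volume a b :=
        ((p.continuous.comp (continuous_const.sub continuous_id)).mul hfc).intervalIntegrable a b
      have hiq : IntervalIntegrable (fun s => Polynomial.eval (b - s) q * f s) volume a b :=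
        ((q.continuous.comp (continuous_const.sub continuous_id)).mul hfc).intervalIntegrable a b
      simp only [Polynomial.eval_add, add_mul]
      rw [intervalIntegral.integral_add hip hiq, hp, hq, add_zero]
    | monomial n c =>
      simp only [Polynomial.eval_monomial]
      rw [intervalIntegral.integral_congr
        (g := fun s => c * ((b - s) ^ n * f s)) (fun s _ => by ring),
        intervalIntegral.integral_const_mul, hmom n, mul_zero]
  -- hence all polynomial moments (in s) vanish
  have hq : ∀ q : Polynomial ℝ, (∫ s in a..b, Polynomial.eval s q * f s) = 0 := by
    intro q
    have h := hpoly (q.comp (Polynomial.C b - Polynomial.X))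
    have he : ∀ s : ℝ, Polynomial.eval (b - s) (q.comp (Polynomial.C b - Polynomial.X))
        = Polynomial.eval s q := by
      intro s; simp [Polynomial.eval_comp, sub_sub_cancel]
    simpa only [he] using h
  -- bound on f
  obtain ⟨M, hM⟩ := isCompact_Icc.exists_bound_of_continuousOn (f := f) hfc.continuousOn
  have hM0 : 0 ≤ M := le_trans (norm_nonneg _) (hM a ⟨le_rfl, hab⟩)
  set I : ℝ := ∫ s in a..b, f s * f s with hI
  have hI0 : 0 ≤ I :=
    intervalIntegral.integral_nonneg hab fun s _ => mul_self_nonneg (f s)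
  have hIle : ∀ ε > (0 : ℝ), I ≤ ε := by
    intro ε hε
    set δ : ℝ := ε / ((M + 1) * (b - a) + 1) with hδdef
    have hden : (0 : ℝ) < (M + 1) * (b - a) + 1 := by nlinarith
    have hδ : 0 < δ := div_pos hε hden
    obtain ⟨p, hp⟩ := exists_polynomial_near_of_continuousOn a b f hfc.continuousOn δ hδ
    have hz := hq p
    have hiff : IntervalIntegrable (fun s => f s * f s) volume a b :=
      (hfc.mul hfc).intervalIntegrable a b
    have hipf : IntervalIntegrable (fun s => Polynomial.eval s p * f s) volume a b :=
      (p.continuous.mul hfc).intervalIntegrable a b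
    have hIeq : I = ∫ s in a..b, (f s - Polynomial.eval s p) * f s := by
      rw [intervalIntegral.integral_congr
        (g := fun s => f s * f s - Polynomial.eval s p * f s) (fun s _ => by ring),
        intervalIntegral.integral_sub hiff hipf, hz, sub_zero, hI]
    have hbnd : ‖∫ s in a..b, (f s - Polynomial.eval s p) * f s‖ ≤ δ * M * |b - a| := by
      apply intervalIntegral.norm_integral_le_of_norm_le_const
      intro x hx
      have hx' : x ∈ Set.Icc a b := by
        rw [Set.uIoc_of_le hab] at hx
        exact ⟨le_of_lt hx.1, hx.2⟩
      have h1 : |f x - Polynomial.eval x p| ≤ δ := by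
        have := hp x hx'
        rw [abs_sub_comm] at this
        exact le_of_lt this
      have h2 : |f x| ≤ M := hM x hx'
      calc ‖(f x - Polynomial.eval x p) * f x‖
          = |f x - Polynomial.eval x p| * |f x| := abs_mul _ _
        _ ≤ δ * M := mul_le_mul h1 h2 (abs_nonneg _) (le_of_lt hδ)
    rw [hIeq]
    have habs : |b - a| = b - a := abs_of_nonneg (by linarith)
    rw [habs] at hbnd
    have hδden : δ * ((M + 1) * (b - a) + 1) = ε := div_mul_cancel₀ ε (ne_of_gt hden)
    calc (∫ s in a..b, (f s - Polynomial.eval s p) * f s)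
        ≤ ‖∫ s in a..b, (f s - Polynomial.eval s p) * f s‖ := le_abs_self _
      _ ≤ δ * M * (b - a) := hbnd
      _ ≤ ε := by nlinarith
  have hIz : I = 0 := by
    refine le_antisymm ?_ hI0
    by_contra h
    push_neg at h
    linarith [hIle (I / 2) (by linarith)]
  -- positivity argument: f = 0 on [a,b]
  by_contra hne
  have hgc : Continuous fun s => f s * f s := hfc.mul hfc
  have htsupp : t ∈ Function.support fun s => f s * f s := by
    simp only [Function.mem_support]
    exact fun h => hne (by nlinarith [sq_abs (f t), abs_nonneg (f t), mul_self_eq_zero.mp h])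
  have hUopen : IsOpen (Function.support fun s => f s * f s) := hgc.isOpen_support
  have htcl : t ∈ closure (Set.Ioo a b) := by
    rw [closure_Ioo hlt.ne]; exact ht
  have hnonempty : ((Function.support fun s => f s * f s) ∩ Set.Ioo a b).Nonempty := by
    have := mem_closure_iff.1 htcl _ hUopen htsupp
    exact this.mono (Set.inter_subset_inter_left _ (fun x hx => hx))
  have hposmeas : 0 < volume ((Function.support fun s => f s * f s) ∩ Set.Ioc a b) := by
    have h1 : 0 < volume ((Function.support fun s => f s * f s) ∩ Set.Ioo a b) :=
      (hUopen.inter isOpen_Ioo).measure_pos volume hnonempty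
    exact lt_of_lt_of_le h1 (measure_mono
      (Set.inter_subset_inter_right _ Set.Ioo_subset_Ioc_self))
  have hpos : 0 < I := by
    rw [hI]
    exact (intervalIntegral.integral_pos_iff_support_of_nonneg_ae
      (ae_of_all _ fun s => mul_self_nonneg (f s))
      ((hfc.mul hfc).intervalIntegrable a b)).2 ⟨hlt, hposmeas⟩
  linarith
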